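/- Let 0 < e₂ < e₁ < 1 and let U₁, U₂ be uninorms on [0,1] with neutral elements e₁, e₂. Suppose: (i) U₁(x,y) = U₂(x,y) ∈ {x,y} for x ∈ [0,e₂), y ∈ [e₂,1], with U₂(y₀,y₀) = y₀ whenever U₂(x₀,y₀) = y₀ for some x₀ ∈ [0,e₂), y₀ ∈ [e₁,1]; (ii) U₁(x,y) = U₂(x,y) = min(x,y) for x ∈ [0,e₂), y ∈ [e₂,e₁]; (iii) U₂(x,y) = min(x,y) on [0,e₂]²; (iv) the rescaled operation Ũ(x,y) = (U₁(e₂+(1−e₂)x, e₂+(1−e₂)y) − e₂)/(1−e₂) is a uninorm with neutral element (e₁−e₂)/(1−e₂) that is distributive over the rescaling S₂ of U₂ restricted to [e₂,1]². Then U₁ is distributive over U₂. -/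

import Mathlib

open Set

/-- `U` is a uninorm on `[0,1]` with neutral element `e`. -/
def IsUninorm (U : ℝ → ℝ → ℝ) (e : ℝ) : Prop :=
  e ∈ Icc (0:ℝ) 1 ∧
  (∀ x ∈ Icc (0:ℝ) 1, ∀ y ∈ Icc (0:ℝ) 1, U x y ∈ Icc (0:ℝ) 1) ∧
  (∀ x ∈ Icc (0:ℝ) 1, ∀ y ∈ Icc (0:ℝ) 1, U x y = U y x) ∧
  (∀ x ∈ Icc (0:ℝ) 1, ∀ y ∈ Icc (0:ℝ) 1, ∀ z ∈ Icc (0:ℝ) 1,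
      U (U x y) z = U x (U y z)) ∧
  (∀ x ∈ Icc (0:ℝ) 1, ∀ y ∈ Icc (0:ℝ) 1, ∀ x' ∈ Icc (0:ℝ) 1, ∀ y' ∈ Icc (0:ℝ) 1,
      x ≤ x' → y ≤ y' → U x y ≤ U x' y') ∧
  (∀ x ∈ Icc (0:ℝ) 1, U e x = x)

/-- `U₁` is distributive over `U₂` on `[0,1]`. -/
def DistributiveOver (U₁ U₂ : ℝ → ℝ → ℝ) : Prop :=
  ∀ x ∈ Icc (0:ℝ) 1, ∀ y ∈ Icc (0:ℝ) 1, ∀ z ∈ Icc (0:ℝ) 1,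
    U₁ x (U₂ y z) = U₂ (U₁ x y) (U₁ x z)

theorem stmt13 (U₁ U₂ : ℝ → ℝ → ℝ) (e₁ e₂ : ℝ)
    (h0 : 0 < e₂) (h21 : e₂ < e₁) (h1 : e₁ < 1)
    (hU₁ : IsUninorm U₁ e₁) (hU₂ : IsUninorm U₂ e₂)
    (hi : ∀ x ∈ Ico (0:ℝ) e₂, ∀ y ∈ Icc e₂ 1,
      U₁ x y = U₂ x y ∧ (U₁ x y = x ∨ U₁ x y = y))
    (hi' : ∀ x₀ ∈ Ico (0:ℝ) e₂, ∀ y₀ ∈ Icc e₁ 1, U₂ x₀ y₀ = y₀ → U₂ y₀ y₀ = y₀)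
    (hii : ∀ x ∈ Ico (0:ℝ) e₂, ∀ y ∈ Icc e₂ e₁,
      U₁ x y = min x y ∧ U₂ x y = min x y)
    (hiii : ∀ x ∈ Icc (0:ℝ) e₂, ∀ y ∈ Icc (0:ℝ) e₂, U₂ x y = min x y)
    (hiv : IsUninorm
      (fun x y => (U₁ (e₂ + (1 - e₂) * x) (e₂ + (1 - e₂) * y) - e₂) / (1 - e₂))
      ((e₁ - e₂) / (1 - e₂)))
    (hiv' : DistributiveOver
      (fun x y => (U₁ (e₂ + (1 - e₂) * x) (e₂ + (1 - e₂) * y) - e₂) / (1 - e₂))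
      (fun x y => (U₂ (e₂ + (1 - e₂) * x) (e₂ + (1 - e₂) * y) - e₂) / (1 - e₂))) :
    DistributiveOver U₁ U₂ := by
  obtain ⟨he₁m, R₁, C₁, A₁, M₁, N₁⟩ := hU₁
  obtain ⟨he₂m, R₂, C₂, A₂, M₂, N₂⟩ := hU₂
  have h1e₂ : (0:ℝ) < 1 - e₂ := by linarith
  have he₂01 : e₂ ∈ Icc (0:ℝ) 1 := ⟨h0.le, by linarith⟩
  have he₁01 : e₁ ∈ Icc (0:ℝ) 1 := ⟨by linarith, h1.le⟩
  have hsub : ∀ {a : ℝ}, a ∈ Icc e₂ 1 → a ∈ Icc (0:ℝ) 1 := fun h => ⟨h0.le.trans h.1, h.2⟩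
  have hrs : ∀ a ∈ Icc e₂ 1, e₂ + (1 - e₂) * ((a - e₂) / (1 - e₂)) = a := by
    intro a _; field_simp; ring
  have hrs01 : ∀ a ∈ Icc e₂ 1, (a - e₂) / (1 - e₂) ∈ Icc (0:ℝ) 1 := by
    intro a ha
    constructor
    · exact div_nonneg (by linarith [ha.1]) h1e₂.le
    · rw [div_le_one h1e₂]; linarith [ha.2]
  have B₁ : ∀ a ∈ Icc e₂ 1, ∀ b ∈ Icc e₂ 1, U₁ a b ∈ Icc e₂ 1 := by
    intro a ha b hb
    have h := hiv.2.1 _ (hrs01 a ha) _ (hrs01 b hb)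
    simp only [hrs a ha, hrs b hb] at h
    constructor
    · have h' := h.1; rw [le_div_iff₀ h1e₂] at h'; linarith
    · have h' := h.2; rw [div_le_one h1e₂] at h'; linarith
  have B₂ : ∀ a ∈ Icc e₂ 1, ∀ b ∈ Icc e₂ 1, U₂ a b ∈ Icc e₂ 1 := by
    intro a ha b hb
    refine ⟨?_, (R₂ a (hsub ha) b (hsub hb)).2⟩
    have h := M₂ e₂ he₂01 b (hsub hb) a (hsub ha) b (hsub hb) ha.1 le_rfl
    rw [N₂ b (hsub hb)] at h
    linarith [hb.1]
  have D : ∀ a ∈ Icc e₂ 1, ∀ b ∈ Icc e₂ 1, ∀ c ∈ Icc e₂ 1,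
      U₁ a (U₂ b c) = U₂ (U₁ a b) (U₁ a c) := by
    intro a ha b hb c hc
    have h := hiv' _ (hrs01 a ha) _ (hrs01 b hb) _ (hrs01 c hc)
    simp only [hrs a ha, hrs b hb, hrs c hc, hrs (U₂ b c) (B₂ b hb c hc),
      hrs (U₁ a b) (B₁ a ha b hb), hrs (U₁ a c) (B₁ a ha c hc)] at h
    rw [div_eq_div_iff h1e₂.ne' h1e₂.ne'] at h
    have h2 := mul_right_cancel₀ h1e₂.ne' h
    linarith
  have hxe₁ : ∀ a ∈ Icc (0:ℝ) 1, U₁ a e₁ = a := fun a ha => (C₁ a ha e₁ he₁01).trans (N₁ a ha)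
  have hAle : ∀ a ∈ Icc (0:ℝ) 1, ∀ b ∈ Icc (0:ℝ) 1, b ≤ e₁ → U₁ a b ≤ a := by
    intro a ha b hb hbe
    have h := M₁ a ha b hb a ha e₁ he₁01 le_rfl hbe
    rwa [hxe₁ a ha] at h
  have hforce₁ : ∀ a ∈ Ico (0:ℝ) e₂, ∀ b ∈ Icc e₂ 1, U₁ a b = b → e₁ ≤ b := by
    intro a ha b hb hab
    by_contra hc
    push_neg at hc
    have h2 := (hii a ha b ⟨hb.1, hc.le⟩).1
    rw [min_eq_left (ha.2.le.trans hb.1), hab] at h2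
    have hab2 : a < b := lt_of_lt_of_le ha.2 hb.1
    linarith
  have he₁B : e₁ ∈ Icc e₂ 1 := ⟨h21.le, h1.le⟩
  suffices key : ∀ x ∈ Icc (0:ℝ) 1, ∀ y ∈ Icc (0:ℝ) 1, ∀ z ∈ Icc (0:ℝ) 1, y ≤ z →
      U₁ x (U₂ y z) = U₂ (U₁ x y) (U₁ x z) by
    intro x hx y hy z hz
    rcases le_total y z with h | h
    · exact key x hx y hy z hz h
    · rw [C₂ y hy z hz, C₂ (U₁ x y) (R₁ x hx y hy) (U₁ x z) (R₁ x hx z hz)]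
      exact key x hx z hz y hy h
  intro x hx y hy z hz hyz
  rcases lt_or_ge x e₂ with hxA' | hxB'
  · -- x < e₂
    have hxA : x ∈ Ico (0:ℝ) e₂ := ⟨hx.1, hxA'⟩
    rcases lt_or_ge z e₂ with hzA' | hzB'
    · -- Case 1 : y ≤ z < e₂
      have hyA : y ∈ Ico (0:ℝ) e₂ := ⟨hy.1, lt_of_le_of_lt hyz hzA'⟩
      have h2 : U₂ y z = y := by
        rw [hiii y ⟨hy.1, hyA.2.le⟩ z ⟨hz.1, hzA'.le⟩, min_eq_left hyz]
      have hu1 : U₁ x y ∈ Icc (0:ℝ) e₂ :=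
        ⟨(R₁ x hx y hy).1, (hAle x hx y hy (by linarith [hyA.2])).trans hxA'.le⟩
      have hu2 : U₁ x z ∈ Icc (0:ℝ) e₂ :=
        ⟨(R₁ x hx z hz).1, (hAle x hx z hz (by linarith)).trans hxA'.le⟩
      rw [h2, hiii (U₁ x y) hu1 (U₁ x z) hu2,
        min_eq_left (M₁ x hx y hy x hx z hz le_rfl hyz)]
    · have hzB : z ∈ Icc e₂ 1 := ⟨hzB', hz.2⟩
      rcases lt_or_ge y e₂ with hyA' | hyB'
      · -- Case 2 : x, y < e₂ ≤ z
        have hyA : y ∈ Ico (0:ℝ) e₂ := ⟨hy.1, hyA'⟩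
        obtain ⟨hyz₁, hwv⟩ := hi y hyA z hzB
        obtain ⟨hxz₁, hxzv⟩ := hi x hxA z hzB
        have hu_le : U₁ x y ≤ x := hAle x hx y hy (by linarith)
        have huA : U₁ x y ∈ Ico (0:ℝ) e₂ :=
          ⟨(R₁ x hx y hy).1, lt_of_le_of_lt hu_le hxA'⟩
        have hkey : U₂ (U₁ x y) z = U₁ x (U₂ y z) := by
          rw [← (hi (U₁ x y) huA z hzB).1, A₁ x hx y hy z hz, hyz₁]
        rcases hxzv with hxz | hxz
        · rcases hwv with hw | hw
          · -- U₁ x z = x, U₁ y z = y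
            have h2 : U₂ y z = y := hyz₁.symm.trans hw
            rw [h2, hxz, hiii (U₁ x y) ⟨huA.1, huA.2.le⟩ x ⟨hx.1, hxA'.le⟩,
              min_eq_left hu_le]
          · -- U₁ x z = x, U₁ y z = z
            have h2 : U₂ y z = z := hyz₁.symm.trans hw
            have h3 : U₂ (U₁ x y) z = x := by rw [hkey, h2, hxz]
            have h4 : U₁ x y = x := by
              rcases (hi (U₁ x y) huA z hzB).2 with h' | h'
              · rw [(hi (U₁ x y) huA z hzB).1, h3] at h'
                exact h'.symm
              · rw [(hi (U₁ x y) huA z hzB).1, h3] at h'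
                exfalso; linarith [hzB.1]
            rw [h2, hxz, h4, hiii x ⟨hx.1, hxA'.le⟩ x ⟨hx.1, hxA'.le⟩, min_self]
        · -- U₁ x z = z
          rw [hxz, hkey]
      · -- Case 3 : x < e₂ ≤ y ≤ z
        have hyB : y ∈ Icc e₂ 1 := ⟨hyB', hy.2⟩
        obtain ⟨hxy₁, hxyv⟩ := hi x hxA y hyB
        obtain ⟨hxz₁, hxzv⟩ := hi x hxA z hzB
        have hwB : U₂ y z ∈ Icc e₂ 1 := B₂ y hyB z hzB
        have hxw : U₁ x (U₂ y z) = U₂ x (U₂ y z) := (hi x hxA (U₂ y z) hwB).1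
        rcases hxzv with hxz | hxz
        · -- U₁ x z = x
          have hL : U₁ x (U₂ y z) = U₁ x y := by
            rw [hxw, C₂ y hy z hz, ← A₂ x hx z hz y hy, ← hxz₁, hxz, ← hxy₁]
          rcases hxyv with hxy | hxy
          · rw [hL, hxy, hxz, hiii x ⟨hx.1, hxA'.le⟩ x ⟨hx.1, hxA'.le⟩, min_self]
          · rw [hL, hxy, hxz, C₂ y hy x hx, ← hxy₁, hxy]
        · -- U₁ x z = z
          rw [hxw, ← A₂ x hx y hy z hz, ← hxy₁, hxz]
  · -- e₂ ≤ x
    have hxB : x ∈ Icc e₂ 1 := ⟨hxB', hx.2⟩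
    rcases lt_or_ge z e₂ with hzA' | hzB'
    · -- Case 4 : y ≤ z < e₂ ≤ x
      have hzA : z ∈ Ico (0:ℝ) e₂ := ⟨hz.1, hzA'⟩
      have hyA : y ∈ Ico (0:ℝ) e₂ := ⟨hy.1, lt_of_le_of_lt hyz hzA'⟩
      obtain ⟨hy₁, hyv⟩ := hi y hyA x hxB
      obtain ⟨hz₁, hzv⟩ := hi z hzA x hxB
      have h2 : U₂ y z = y := by
        rw [hiii y ⟨hy.1, hyA.2.le⟩ z ⟨hz.1, hzA'.le⟩, min_eq_left hyz]
      rw [h2, C₁ x hx y hy, C₁ x hx z hz]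
      rcases hyv with hyv | hyv
      · rcases hzv with hzv | hzv
        · rw [hyv, hzv, hiii y ⟨hy.1, hyA.2.le⟩ z ⟨hz.1, hzA'.le⟩, min_eq_left hyz]
        · rw [hyv, hzv, ← hy₁, hyv]
      · rcases hzv with hzv | hzv
        · exfalso
          have hm := M₁ y hy x hx z hz x hx hyz le_rfl
          rw [hyv, hzv] at hm
          linarith
        · have he₁x : e₁ ≤ x := hforce₁ y hyA x hxB hyv
          have hUxx : U₂ x x = x := hi' y hyA x ⟨he₁x, hx.2⟩ (hy₁.symm.trans hyv)
          rw [hyv, hzv, hUxx]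
    · have hzB : z ∈ Icc e₂ 1 := ⟨hzB', hz.2⟩
      rcases lt_or_ge y e₂ with hyA' | hyB'
      · -- Case 5 : y < e₂ ≤ x, z
        have hyA : y ∈ Ico (0:ℝ) e₂ := ⟨hy.1, hyA'⟩
        obtain ⟨hyz₁, hwv⟩ := hi y hyA z hzB
        obtain ⟨hyx₁, hyxv⟩ := hi y hyA x hxB
        have huzB : U₁ x z ∈ Icc e₂ 1 := B₁ x hxB z hzB
        rcases hwv with hw | hw
        · -- U₁ y z = y
          have h2 : U₂ y z = y := hyz₁.symm.trans hw
          rcases hyxv with hyx | hyx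
          · have h5 : U₁ y (U₁ x z) = y := by
              rw [← A₁ y hy x hx z hz, hyx, hw]
            rw [h2, C₁ x hx y hy, hyx, ← (hi y hyA (U₁ x z) huzB).1, h5]
          · have he₁x : e₁ ≤ x := hforce₁ y hyA x hxB hyx
            have hDx : U₁ x (U₂ e₁ z) = U₂ x (U₁ x z) := by
              have h := D x hxB e₁ he₁B z hzB
              rwa [hxe₁ x hx] at h
            have hvB : U₂ e₁ z ∈ Icc e₂ 1 := B₂ e₁ he₁B z hzB
            have hye₁ : U₂ y e₁ = y := by
              rw [(hii y hyA e₁ ⟨h21.le, le_rfl⟩).2,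
                min_eq_left (by linarith [hyA.2] : y ≤ e₁)]
            have hyv₂ : U₂ y (U₂ e₁ z) = y := by
              rw [← A₂ y hy e₁ he₁01 z hz, hye₁, h2]
            have hyv₁ : U₁ y (U₂ e₁ z) = y := ((hi y hyA _ hvB).1).trans hyv₂
            have huB : U₁ x (U₂ e₁ z) ∈ Icc e₂ 1 := B₁ x hxB _ hvB
            have h6 : U₁ (U₁ x (U₂ e₁ z)) y = x := by
              rw [A₁ x hx (U₂ e₁ z) (hsub hvB) y hy, C₁ (U₂ e₁ z) (hsub hvB) y hy,
                hyv₁, C₁ x hx y hy, hyx]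
            have h7 : U₁ y (U₁ x (U₂ e₁ z)) = x :=
              (C₁ y hy _ (hsub huB)).trans h6
            rcases (hi y hyA _ huB).2 with h8 | h8
            · rw [h7] at h8
              exfalso; linarith [hyA.2]
            · rw [h7] at h8
              rw [h2, C₁ x hx y hy, hyx, ← hDx, ← h8]
        · -- U₁ y z = z
          have h2 : U₂ y z = z := hyz₁.symm.trans hw
          rcases hyxv with hyx | hyx
          · have h5 : U₁ y (U₁ x z) = z := by
              rw [← A₁ y hy x hx z hz, hyx, hw]
            have h6 : U₁ x z = z := by
              rcases (hi y hyA (U₁ x z) huzB).2 with h8 | h8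
              · rw [h5] at h8
                exfalso; linarith [hzB.1, hyA.2]
              · rw [h5] at h8; exact h8.symm
            rw [h2, h6, C₁ x hx y hy, hyx, h2]
          · have he₁x : e₁ ≤ x := hforce₁ y hyA x hxB hyx
            have hDx : U₁ x (U₂ e₁ z) = U₂ x (U₁ x z) := by
              have h := D x hxB e₁ he₁B z hzB
              rwa [hxe₁ x hx] at h
            have hvB : U₂ e₁ z ∈ Icc e₂ 1 := B₂ e₁ he₁B z hzB
            have hye₁ : U₂ y e₁ = y := by
              rw [(hii y hyA e₁ ⟨h21.le, le_rfl⟩).2,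
                min_eq_left (by linarith [hyA.2] : y ≤ e₁)]
            have hyv₂ : U₂ y (U₂ e₁ z) = z := by
              rw [← A₂ y hy e₁ he₁01 z hz, hye₁, h2]
            have h6 : U₂ e₁ z = z := by
              rcases (hi y hyA _ hvB).2 with h8 | h8
              · rw [(hi y hyA _ hvB).1, hyv₂] at h8
                exfalso; linarith [hzB.1, hyA.2]
              · rw [(hi y hyA _ hvB).1, hyv₂] at h8; exact h8.symm
            rw [h2, C₁ x hx y hy, hyx, ← hDx, h6]
      · -- Case 6 : all ≥ e₂
        exact D x hxB y ⟨hyB', hy.2⟩ z hzB
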